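/- Let f : [a,b] → ℝ be continuously differentiable with f(a) ≥ 0 and f'(x) ≥ 2 for all x ∈ (a,b), and let p ≥ 1. Then ∫_a^b f(x)^(p+2) dx ≥ (1/(b-a)^(p-1)) · (∫_a^b f(x) dx)^(p+1). -/

import Mathlib

open MeasureTheory Set intervalIntegral

theorem akkouchi_type (a b p : ℝ) (hab : a < b) (hp : 1 ≤ p) (f f' : ℝ → ℝ)
    (hfc : ContinuousOn f (Set.Icc a b))
    (hfd : ∀ x ∈ Set.Ioo a b, HasDerivAt f (f' x) x)
    (hf'c : ContinuousOn f' (Set.Icc a b))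
    (hfa : 0 ≤ f a) (hf' : ∀ x ∈ Set.Ioo a b, 2 ≤ f' x) :
    (∫ x in a..b, f x ^ (p + 2)) ≥
      (1 / (b - a) ^ (p - 1)) * (∫ x in a..b, f x) ^ (p + 1) := by
  have hL : 0 < b - a := sub_pos.mpr hab
  -- pointwise lower bound
  have key : ∀ x ∈ Icc a b, 2 * (x - a) ≤ f x := by
    intro x hx
    rcases eq_or_lt_of_le hx.1 with h | h
    · simp [← h]; linarith
    · obtain ⟨c, hc, hcs⟩ := exists_hasDerivAt_eq_slope f f' h
        (hfc.mono (Icc_subset_Icc le_rfl hx.2))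
        (fun y hy => hfd y ⟨hy.1, lt_of_lt_of_le hy.2 hx.2⟩)
      have h2 : 2 ≤ f' c := hf' c ⟨hc.1, lt_of_lt_of_le hc.2 hx.2⟩
      have : 2 ≤ (f x - f a) / (x - a) := hcs ▸ h2
      have hxa : 0 < x - a := sub_pos.mpr h
      rw [le_div_iff₀ hxa] at this
      linarith
  have hfnn : ∀ x ∈ Icc a b, 0 ≤ f x := fun x hx =>
    le_trans (by nlinarith [hx.1] : (0:ℝ) ≤ 2*(x-a)) (key x hx)
  -- integral lower bound
  have hint_f : IntervalIntegrable f volume a b :=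
    hfc.intervalIntegrable_of_Icc hab.le
  have hIlb : (b - a) ^ (2:ℕ) ≤ ∫ x in a..b, f x := by
    have h1 : (∫ x in a..b, 2 * (x - a)) ≤ ∫ x in a..b, f x := by
      apply intervalIntegral.integral_mono_on hab.le _ hint_f
      · exact fun x hx => key x hx
      · exact (Continuous.intervalIntegrable (by continuity) a b)
    have h2 : (∫ x in a..b, 2 * (x - a)) = (b - a) ^ (2:ℕ) := by
      have : (∫ x in a..b, 2 * (x - a)) = 2 * ((b^2 - a^2)/2 - a * (b - a)) := by
        rw [intervalIntegral.integral_const_mul, intervalIntegral.integral_sub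
          (Continuous.intervalIntegrable (by continuity) a b)
          (Continuous.intervalIntegrable (by continuity) a b),
          integral_id, intervalIntegral.integral_const]
        simp only [smul_eq_mul]
        ring
      rw [this]; ring
    linarith [h2 ▸ h1]
  set I := ∫ x in a..b, f x with hI
  have hIpos : 0 < I := lt_of_lt_of_le (by positivity) hIlb
  -- Jensen
  set μ := volume.restrict (Icc a b) with hμ
  have hμuniv : μ univ = ENNReal.ofReal (b - a) := by
    rw [hμ, Measure.restrict_apply_univ, Real.volume_Icc]
  have : IsFiniteMeasure μ := ⟨by rw [hμuniv]; exact ENNReal.ofReal_lt_top⟩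
  have : NeZero μ := ⟨by
    intro h
    rw [h] at hμuniv
    simp [eq_comm, ENNReal.ofReal_eq_zero] at hμuniv
    linarith⟩
  have hconv : ConvexOn ℝ (Ici 0) (fun x : ℝ => x ^ (p + 2)) :=
    convexOn_rpow (by linarith)
  have hcont : Continuous (fun x : ℝ => x ^ (p + 2)) :=
    Real.continuous_rpow_const (by linarith)
  have hfint : Integrable f μ := hfc.integrableOn_Icc
  have hgint : Integrable ((fun x : ℝ => x ^ (p + 2)) ∘ f) μ :=
    (hcont.comp_continuousOn hfc).integrableOn_Icc
  have hfs : ∀ᵐ x ∂μ, f x ∈ Ici 0 := by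
    rw [hμ, ae_restrict_iff' measurableSet_Icc]
    exact Filter.Eventually.of_forall (fun x hx => hfnn x hx)
  have hjen := hconv.map_average_le hcont.continuousOn isClosed_Ici hfs hfint hgint
  have havg : ∀ g : ℝ → ℝ, (⨍ x, g x ∂μ) = (b - a)⁻¹ * ∫ x in a..b, g x := by
    intro g
    rw [average_eq, measureReal_def, hμuniv, ENNReal.toReal_ofReal hL.le, smul_eq_mul, hμ,
      intervalIntegral.integral_of_le hab.le, ← integral_Icc_eq_integral_Ioc]
  rw [havg, havg] at hjen
  -- hjen : ((b-a)⁻¹ * I) ^ (p+2) ≤ (b-a)⁻¹ * ∫ f^(p+2)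
  set J := ∫ x in a..b, f x ^ (p + 2) with hJdef
  set L := b - a with hLdef
  have hJ : L * ((L⁻¹ * I) ^ (p + 2)) ≤ J := by
    have := mul_le_mul_of_nonneg_left hjen hL.le
    calc L * ((L⁻¹ * I) ^ (p + 2)) ≤ L * (L⁻¹ * J) := this
      _ = J := by field_simp
  have hIlb' : L ^ ((2:ℝ)) ≤ I := by
    rw [show ((2:ℝ)) = ((2:ℕ):ℝ) by norm_num, Real.rpow_natCast]; exact hIlb
  have e1 : (L⁻¹ * I) ^ (p + 2) = I ^ (p + 1) * I * (L ^ (p + 2))⁻¹ := by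
    rw [Real.mul_rpow (inv_nonneg.mpr hL.le) hIpos.le, Real.inv_rpow hL.le,
      show p + 2 = (p + 1) + 1 by ring, Real.rpow_add hIpos, Real.rpow_one]
    ring
  have e3 : L ^ (p - 1) * (L * L ^ ((2:ℝ))) = L ^ ((p+1)+1) := by
    rw [show L * L ^ ((2:ℝ)) = L ^ ((1:ℝ)) * L ^ ((2:ℝ)) by rw [Real.rpow_one],
      ← Real.rpow_add hL, ← Real.rpow_add hL]
    congr 1
    ring
  have hstep : L * (I ^ (p + 1) * L ^ ((2:ℝ)) * (L ^ ((p+1)+1))⁻¹) ≤ L * ((L⁻¹ * I) ^ (p + 2)) := by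
    rw [e1, show (p:ℝ) + 2 = (p+1)+1 by ring]
    have h4 : I ^ (p + 1) * L ^ ((2:ℝ)) ≤ I ^ (p + 1) * I :=
      mul_le_mul_of_nonneg_left hIlb' (Real.rpow_nonneg hIpos.le _)
    have h5 : (0:ℝ) < (L ^ ((p+1)+1)) := Real.rpow_pos_of_pos hL _
    have := mul_le_mul_of_nonneg_right h4 (inv_nonneg.mpr h5.le)
    nlinarith [this]
  have heq : L * (I ^ (p + 1) * L ^ ((2:ℝ)) * (L ^ ((p+1)+1))⁻¹) = (1 / L ^ (p - 1)) * I ^ (p + 1) := by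
    rw [← e3]
    have h6 : (0:ℝ) < L ^ (p - 1) := Real.rpow_pos_of_pos hL _
    have h7 : (0:ℝ) < L ^ ((2:ℝ)) := Real.rpow_pos_of_pos hL _
    field_simp
  calc (1 / L ^ (p - 1)) * I ^ (p + 1)
      = L * (I ^ (p + 1) * L ^ ((2:ℝ)) * (L ^ ((p+1)+1))⁻¹) := heq.symm
    _ ≤ L * ((L⁻¹ * I) ^ (p + 2)) := hstep
    _ ≤ J := hJ
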